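/- Let p ≥ 1, n ≥ 1, let x_1,…,x_n ∈ ℝ^p be nonzero vectors, and let T be a positive definite real symmetric p × p matrix satisfying Tyler's fixed-point equation T = (p/n) ∑_{i=1}^n x_i x_iᵀ / (x_iᵀ T^{-1} x_i). Define t_i = T^{-1/2} x_i / ‖T^{-1/2} x_i‖ for i = 1,…,n. Then ∑_{i=1}^n ∑_{j=1}^n (t_iᵀ t_j)² = n²/p. -/

import Mathlib

open Matrix

/-- The Euclidean norm of a vector in `ℝ^p`. -/
noncomputable def euclNorm {p : ℕ} (v : Fin p → ℝ) : ℝ :=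
  Real.sqrt (∑ i, v i ^ 2)

/-- The square root of a positive semidefinite matrix, as defined in the older Mathlib
(`Matrix.PosSemidef.sqrt`, since removed). -/
noncomputable def Matrix.PosSemidef.sqrt {n 𝕜 : Type*} [Fintype n] [RCLike 𝕜] [DecidableEq n]
    [PartialOrder 𝕜] [StarOrderedRing 𝕜] {A : Matrix n n 𝕜} (hA : A.PosSemidef) : Matrix n n 𝕜 :=
  hA.1.eigenvectorUnitary.1 * diagonal ((↑) ∘ (√·) ∘ hA.1.eigenvalues) *
  (star hA.1.eigenvectorUnitary : Matrix n n 𝕜)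

lemma psd_sqrt_posSemidef {p : ℕ} {A : Matrix (Fin p) (Fin p) ℝ} (hA : A.PosSemidef) :
    hA.sqrt.PosSemidef := by
  unfold Matrix.PosSemidef.sqrt
  exact PosSemidef.mul_mul_conjTranspose_same
    (posSemidef_diagonal_iff.2 fun i => by simp [Real.sqrt_nonneg]) _

lemma psd_sqrt_mul_self {p : ℕ} {A : Matrix (Fin p) (Fin p) ℝ} (hA : A.PosSemidef) :
    hA.sqrt * hA.sqrt = A := by
  unfold Matrix.PosSemidef.sqrt
  conv_rhs => rw [hA.1.spectral_theorem, Unitary.conjStarAlgAut_apply]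
  have hU : (star hA.1.eigenvectorUnitary : Matrix (Fin p) (Fin p) ℝ) *
      (hA.1.eigenvectorUnitary : Matrix (Fin p) (Fin p) ℝ) = 1 := Unitary.coe_star_mul_self _
  simp only [Matrix.mul_assoc]
  rw [← Matrix.mul_assoc (star hA.1.eigenvectorUnitary : Matrix (Fin p) (Fin p) ℝ), hU,
    Matrix.one_mul, ← Matrix.mul_assoc (diagonal _), diagonal_mul_diagonal]
  congr 3
  funext i
  simp [Real.mul_self_sqrt (hA.eigenvalues_nonneg i)]

lemma conj_vecMulVec (p : ℕ) (S : Matrix (Fin p) (Fin p) ℝ) (hs : Sᵀ = S) (a : Fin p → ℝ) :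
    S * vecMulVec a a * S = vecMulVec (S *ᵥ a) (S *ᵥ a) := by
  have hsym : ∀ u v, S u v = S v u := fun u v => by conv_lhs => rw [← hs, transpose_apply]
  ext i j
  simp only [mul_apply, vecMulVec_apply, mulVec, dotProduct]
  have h1 : ∀ l, (∑ k, S i k * (a k * a l)) * S l j
      = ∑ k, (S i k * a k) * (S j l * a l) := by
    intro l; rw [Finset.sum_mul]; exact Finset.sum_congr rfl fun k _ => by rw [hsym l j]; ring
  simp_rw [h1]
  rw [Finset.sum_comm, ← Finset.sum_mul_sum]

lemma sumswap4 {n p : ℕ} (f : Fin n → Fin n → Fin p → Fin p → ℝ) :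
    ∑ i, ∑ j, ∑ a, ∑ b, f i j a b = ∑ a, ∑ b, ∑ i, ∑ j, f i j a b := by
  have h1 : ∀ i : Fin n, ∑ j, ∑ a, ∑ b, f i j a b = ∑ a, ∑ b, ∑ j, f i j a b := by
    intro i
    rw [Finset.sum_comm]
    exact Finset.sum_congr rfl fun a _ => Finset.sum_comm
  simp_rw [h1]
  rw [Finset.sum_comm]
  exact Finset.sum_congr rfl fun a _ => Finset.sum_comm

/-- If `T` is a positive definite solution of Tyler's fixed-point equation
`T = (p/n) ∑ᵢ xᵢ xᵢᵀ / (xᵢᵀ T⁻¹ xᵢ)` and `tᵢ = T^{-1/2} xᵢ / ‖T^{-1/2} xᵢ‖`, then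
`∑ᵢ ∑ⱼ (tᵢᵀ tⱼ)² = n²/p`. -/
theorem tyler_normalized_gram_sum (p n : ℕ) (hp : 1 ≤ p) (hn : 1 ≤ n)
    (x : Fin n → Fin p → ℝ) (hx : ∀ i, x i ≠ 0)
    (T : Matrix (Fin p) (Fin p) ℝ) (hT : T.PosDef)
    (htyler : T = ((p : ℝ) / n) •
      ∑ i, (x i ⬝ᵥ (T⁻¹ *ᵥ x i))⁻¹ • vecMulVec (x i) (x i))
    (t : Fin n → Fin p → ℝ)
    (ht : ∀ i, t i = (euclNorm ((hT.posSemidef.sqrt)⁻¹ *ᵥ x i))⁻¹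
      • ((hT.posSemidef.sqrt)⁻¹ *ᵥ x i)) :
    ∑ i, ∑ j, (t i ⬝ᵥ t j) ^ 2 = (n : ℝ) ^ 2 / p := by
  have hp0 : (p : ℝ) ≠ 0 := by positivity
  have hn0 : (n : ℝ) ≠ 0 := by positivity
  set Q := hT.posSemidef.sqrt with hQdef
  have hQps : Q.PosSemidef := psd_sqrt_posSemidef hT.posSemidef
  have hQmul : Q * Q = T := psd_sqrt_mul_self hT.posSemidef
  have hQdet : IsUnit Q.det := by
    have h : Q.det * Q.det = T.det := by rw [← det_mul, hQmul]
    have := hT.det_pos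
    refine isUnit_iff_ne_zero.2 fun h0 => ?_
    rw [h0, mul_zero] at h
    exact this.ne' h.symm
  set S := Q⁻¹ with hSdef
  have hSQ : S * Q = 1 := nonsing_inv_mul Q hQdet
  have hQS : Q * S = 1 := mul_nonsing_inv Q hQdet
  have hQsym : Qᵀ = Q := by
    have := hQps.isHermitian
    rwa [IsHermitian, conjTranspose_eq_transpose_of_trivial] at this
  have hSsym : Sᵀ = S := by rw [hSdef, transpose_nonsing_inv, hQsym]
  have hTinv : T⁻¹ = S * S := by rw [← hQmul, Matrix.mul_inv_rev]
  set y : Fin n → Fin p → ℝ := fun i => S *ᵥ x i with hydef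
  -- the quadratic form equals the squared norm of y i
  have hc : ∀ i, x i ⬝ᵥ T⁻¹ *ᵥ x i = y i ⬝ᵥ y i := by
    intro i
    have hvm : x i ᵥ* S = S *ᵥ x i := by
      conv_lhs => rw [← hSsym]
      exact vecMul_transpose S (x i)
    rw [hTinv, ← mulVec_mulVec, dotProduct_mulVec, hvm]
  have hy0 : ∀ i, y i ≠ 0 := by
    intro i h0
    apply hx i
    have : Q *ᵥ (S *ᵥ x i) = x i := by rw [mulVec_mulVec, hQS, one_mulVec]
    rw [show S *ᵥ x i = y i from rfl, h0, mulVec_zero] at this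
    exact this.symm
  have hcpos : ∀ i, 0 < y i ⬝ᵥ y i := by
    intro i
    have h := hy0 i
    rw [Function.ne_iff] at h
    obtain ⟨a, ha⟩ := h
    have : y i ⬝ᵥ y i = ∑ a, y i a ^ 2 := by
      simp [dotProduct, sq]
    rw [this]
    exact Finset.sum_pos' (fun b _ => sq_nonneg _) ⟨a, Finset.mem_univ a, lt_of_le_of_ne (sq_nonneg _) (Ne.symm (pow_ne_zero 2 ha))⟩
  have hnorm_sq : ∀ i, euclNorm (y i) ^ 2 = y i ⬝ᵥ y i := by
    intro i
    rw [euclNorm, Real.sq_sqrt (by positivity)]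
    simp [dotProduct, sq]
  have hnorm_ne : ∀ i, euclNorm (y i) ≠ 0 := by
    intro i h0
    have := hnorm_sq i
    rw [h0] at this
    simp at this
    exact (hcpos i).ne' this.symm
  -- vecMulVec of t i
  have htvv : ∀ i, vecMulVec (t i) (t i) = (y i ⬝ᵥ y i)⁻¹ • vecMulVec (y i) (y i) := by
    intro i
    ext a b
    rw [ht i]
    simp only [vecMulVec_apply, Pi.smul_apply, smul_eq_mul, Matrix.smul_apply]
    rw [← hnorm_sq i, sq, mul_inv]
    ring
  -- conjugated Tyler equation
  have h1 : S * T * S = 1 := by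
    rw [← hQmul, show S * (Q * Q) * S = (S * Q) * (Q * S) from by
      rw [mul_assoc, mul_assoc, mul_assoc], hSQ, hQS, one_mul]
  have h2 : S * T * S = ((p : ℝ) / n) •
      ∑ i, (y i ⬝ᵥ y i)⁻¹ • vecMulVec (y i) (y i) := by
    have step : S * (((p : ℝ) / n) •
        ∑ i, (x i ⬝ᵥ (T⁻¹ *ᵥ x i))⁻¹ • vecMulVec (x i) (x i)) * S
        = ((p : ℝ) / n) • ∑ i, (y i ⬝ᵥ y i)⁻¹ • vecMulVec (y i) (y i) := by
      rw [Matrix.mul_smul, Matrix.smul_mul]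
      congr 1
      rw [Finset.mul_sum, Finset.sum_mul]
      refine Finset.sum_congr rfl fun i _ => ?_
      rw [Matrix.mul_smul, Matrix.smul_mul, hc i, conj_vecMulVec p S hSsym (x i)]
    rw [← step, ← htyler]
  -- the Gram matrix identity
  have hMat : ∑ i, vecMulVec (t i) (t i) = ((n : ℝ) / p) • (1 : Matrix (Fin p) (Fin p) ℝ) := by
    have h3 : (1 : Matrix (Fin p) (Fin p) ℝ) = ((p : ℝ) / n) •
        ∑ i, (y i ⬝ᵥ y i)⁻¹ • vecMulVec (y i) (y i) := by rw [← h1, h2]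
    calc ∑ i, vecMulVec (t i) (t i)
        = ∑ i, (y i ⬝ᵥ y i)⁻¹ • vecMulVec (y i) (y i) :=
          Finset.sum_congr rfl fun i _ => htvv i
      _ = ((n : ℝ) / p) • (((p : ℝ) / n) •
            ∑ i, (y i ⬝ᵥ y i)⁻¹ • vecMulVec (y i) (y i)) := by
          rw [smul_smul, div_mul_div_comm, mul_comm (n : ℝ) (p : ℝ),
            div_self (by positivity), one_smul]
      _ = ((n : ℝ) / p) • (1 : Matrix (Fin p) (Fin p) ℝ) := by rw [← h3]
  -- entrywise
  have hM : ∀ a b : Fin p, ∑ i, t i a * t i b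
      = ((n : ℝ) / p) * (if a = b then 1 else 0) := by
    intro a b
    have := congrFun (congrFun hMat a) b
    simpa [Matrix.sum_apply, vecMulVec_apply, Matrix.one_apply] using this
  -- final computation
  have key : ∑ i, ∑ j, (t i ⬝ᵥ t j) ^ 2
      = ∑ a, ∑ b, (∑ i, t i a * t i b) ^ 2 := by
    have h4 : ∀ i j : Fin n, (t i ⬝ᵥ t j) ^ 2
        = ∑ a, ∑ b, (t i a * t i b) * (t j a * t j b) := by
      intro i j
      rw [sq, dotProduct, Finset.sum_mul_sum]
      exact Finset.sum_congr rfl fun a _ => Finset.sum_congr rfl fun b _ => by ring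
    simp_rw [h4]
    rw [sumswap4]
    refine Finset.sum_congr rfl fun a _ => Finset.sum_congr rfl fun b _ => ?_
    rw [sq, Finset.sum_mul_sum]
  rw [key]
  simp_rw [hM]
  have : ∀ a b : Fin p, (((n : ℝ) / p) * (if a = b then 1 else 0)) ^ 2
      = if a = b then ((n : ℝ) / p) ^ 2 else 0 := by
    intro a b
    split <;> simp
  simp_rw [this, Finset.sum_ite_eq, Finset.mem_univ, if_true, Finset.sum_const,
    Finset.card_univ, Fintype.card_fin, nsmul_eq_mul]
  field_simp
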